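/- arXiv:0704.3860 — 3 statements merged into one kernel-verified Lean document; each statement's English description precedes it below -/
import Mathlib

section
/- Suppose H has a finite generating set {h₁, ..., h_k} as a module over A (i.e., finite sums Σ Φ(f_i)h_{j_i} are dense in H), and each h_i is algebraic with respect to T. Then every element of H is algebraic with respect to T, and moreover there exists a single nonzero m ∈ A with Φ(m) = 0. -/
/-- If H has a finite generating set {h₁,...,h_k} over A (finite sums
Σ Φ(fᵢ)hᵢ are dense) and each hᵢ is algebraic, then every element of H is algebraic
and there is a single nonzero m ∈ A with Φ(m) = 0. -/
theorem stmt11 {H : Type*} [NormedAddCommGroup H] [InnerProductSpace ℂ H] [CompleteSpace H]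
    {A : Type*} [CommRing A] [Algebra ℂ A] [IsDomain A]
    (Φ : A →ₐ[ℂ] (H →L[ℂ] H))
    (k : ℕ) (h : Fin k → H)
    (hgen : Dense ((Submodule.span ℂ
      {x : H | ∃ (f : A) (i : Fin k), x = Φ f (h i)} : Submodule ℂ H) : Set H))
    (halg : ∀ i : Fin k, ∃ θ : A, θ ≠ 0 ∧ Φ θ (h i) = 0) :
    (∀ x : H, ∃ θ : A, θ ≠ 0 ∧ Φ θ x = 0) ∧ ∃ m : A, m ≠ 0 ∧ Φ m = 0 := by
  choose θ hθne hθ using halg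
  set m : A := ∏ i, θ i with hm
  have hmne : m ≠ 0 := Finset.prod_ne_zero_iff.mpr fun i _ => hθne i
  have hΦm : Φ m = 0 := by
    ext x
    -- the kernel of Φ m is a closed subspace containing the generating set
    have hker : ∀ y ∈ (Submodule.span ℂ
        {x : H | ∃ (f : A) (i : Fin k), x = Φ f (h i)} : Submodule ℂ H),
        Φ m y = 0 := by
      intro y hy
      refine Submodule.span_induction ?_ (by simp) ?_ ?_ hy
      · rintro z ⟨f, i, rfl⟩
        have : m * f = (f * ∏ j ∈ Finset.univ.erase i, θ j) * θ i := by
          rw [hm, ← Finset.mul_prod_erase Finset.univ θ (Finset.mem_univ i)]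
          ring
        have h1 : Φ m (Φ f (h i)) = Φ (m * f) (h i) := by
          rw [map_mul]; rfl
        rw [h1, this, map_mul]
        show Φ (f * ∏ j ∈ Finset.univ.erase i, θ j) (Φ (θ i) (h i)) = 0
        rw [hθ i, map_zero]
      · intro a b _ _ ha hb; simp [ha, hb]
      · intro c a _ ha; simp [ha]
    -- extend to closure by continuity
    have hcl : ∀ y ∈ closure ((Submodule.span ℂ
        {x : H | ∃ (f : A) (i : Fin k), x = Φ f (h i)} : Submodule ℂ H) : Set H),
        Φ m y = 0 := by
      intro y hy
      have : Set.EqOn (Φ m) (0 : H →L[ℂ] H) ((Submodule.span ℂ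
          {x : H | ∃ (f : A) (i : Fin k), x = Φ f (h i)} : Submodule ℂ H) : Set H) :=
        fun z hz => hker z hz
      have := Set.EqOn.closure this (Φ m).continuous continuous_const
      exact this hy
    have := hcl x (by rw [hgen.closure_eq]; trivial)
    simpa using this
  exact ⟨fun x => ⟨m, hmne, by rw [hΦm]; rfl⟩, m, hmne, hΦm⟩
end

section
/- If B, the set of algebraic elements with respect to T, is a closed subspace and the operators Φ_B(θ) on H/B are defined by Φ_B(θ)[h] = [Φ(θ)h], then every nonzero element [a] of H/B is transcendental with respect to T_B: Φ_B(θ)[a] ≠ 0 for all nonzero θ ∈ A. -/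
/-- If B (the algebraic elements) is a closed subspace, then every nonzero
element [a] of H/B is transcendental with respect to the quotient operators:
Φ_B(θ)[a] ≠ 0 for every nonzero θ ∈ A. -/
theorem stmt16 {H : Type*} [NormedAddCommGroup H] [InnerProductSpace ℂ H] [CompleteSpace H]
    {A : Type*} [CommRing A] [Algebra ℂ A] [IsDomain A]
    (Φ : A →ₐ[ℂ] (H →L[ℂ] H)) (B : Submodule ℂ H)
    (hB : (B : Set H) = {h : H | ∃ θ : A, θ ≠ 0 ∧ Φ θ h = 0})
    (hcl : IsClosed (B : Set H))
    (hinv : ∀ θ : A, B ≤ B.comap (Φ θ).toLinearMap)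
    (a : H) (ha : B.mkQ a ≠ 0) (θ : A) (hθ : θ ≠ 0) :
    B.mapQ B (Φ θ).toLinearMap (hinv θ) (B.mkQ a) ≠ 0 := by
  intro h
  rw [Submodule.mkQ_apply, Submodule.mapQ_apply, Submodule.Quotient.mk_eq_zero] at h
  have h1 : Φ θ a ∈ (B : Set H) := h
  rw [hB] at h1
  obtain ⟨θ', hθ', h0⟩ := h1
  have hmem : a ∈ (B : Set H) := by
    rw [hB]
    refine ⟨θ' * θ, mul_ne_zero hθ' hθ, ?_⟩
    rw [map_mul]
    simpa using h0
  exact ha (by rwa [Submodule.mkQ_apply, Submodule.Quotient.mk_eq_zero])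
end

section
/- Let M ⊆ B be a closed subspace invariant under every Φ(u), u ∈ A. Then for a ∈ H, the class [a] ∈ H/M satisfies Φ_M(θ)[a] = 0 for some nonzero θ ∈ A if and only if a is algebraic with respect to T. -/
/-- If M ⊆ B is a closed Φ-invariant subspace, then [a] ∈ H/M is annihilated
by Φ_M(θ) for some nonzero θ iff a is algebraic with respect to T. -/
theorem stmt17 {H : Type*} [NormedAddCommGroup H] [InnerProductSpace ℂ H] [CompleteSpace H]
    {A : Type*} [CommRing A] [Algebra ℂ A] [IsDomain A]
    (Φ : A →ₐ[ℂ] (H →L[ℂ] H)) (M : Submodule ℂ H)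
    (hcl : IsClosed (M : Set H))
    (hinv : ∀ u : A, M ≤ M.comap (Φ u).toLinearMap)
    (hMB : ∀ x ∈ M, ∃ θ : A, θ ≠ 0 ∧ Φ θ x = 0)
    (a : H) :
    (∃ θ : A, θ ≠ 0 ∧ M.mapQ M (Φ θ).toLinearMap (hinv θ) (M.mkQ a) = 0) ↔
      ∃ θ : A, θ ≠ 0 ∧ Φ θ a = 0 := by
  constructor
  · rintro ⟨θ, hθ, h⟩
    rw [Submodule.mkQ_apply, Submodule.mapQ_apply, Submodule.Quotient.mk_eq_zero] at h
    obtain ⟨θ', hθ', h'⟩ := hMB _ h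
    refine ⟨θ' * θ, mul_ne_zero hθ' hθ, ?_⟩
    have := congrArg (fun f : H →L[ℂ] H => f a) (map_mul Φ θ' θ)
    simpa [this] using h'
  · rintro ⟨θ, hθ, h⟩
    exact ⟨θ, hθ, by rw [Submodule.mkQ_apply, Submodule.mapQ_apply]; simp [h]⟩
end
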